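/- Let μ be a finite Borel measure on ℝ and λ > 0, and set F(x) = ∫_ℝ G_λ(y − x) μ(dy). Then for every x ∈ ℝ, F has a left derivative at x and it equals ∫_ℝ g_λ(x − y) μ(dy) + μ({x}); that is, lim_{h→0−} (F(x+h) − F(x))/h = ∫_ℝ g_λ(x − y) μ(dy) + μ({x}). -/

import Mathlib

open MeasureTheory Filter Set

/-- `G_λ(x) = (2λ)^{-1/2} · exp(-√(2λ)·|x|)`. -/
noncomputable def Gl (l : ℝ) (x : ℝ) : ℝ :=
  (2 * l) ^ (-(1/2 : ℝ)) * Real.exp (-Real.sqrt (2 * l) * |x|)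

/-- `g_λ(x) = -sgn(x) · exp(-√(2λ)·|x|)`. -/
noncomputable def gl (l : ℝ) (x : ℝ) : ℝ :=
  -Real.sign x * Real.exp (-Real.sqrt (2 * l) * |x|)

lemma measurable_realSign : Measurable Real.sign := by
  unfold Real.sign
  exact Measurable.ite (measurableSet_lt measurable_id measurable_const)
    measurable_const <| Measurable.ite (measurableSet_lt measurable_const measurable_id)
    measurable_const measurable_const

lemma Gl_eq {l : ℝ} (hl : 0 < l) (u : ℝ) :
    Gl l u = (Real.sqrt (2*l))⁻¹ * Real.exp (-Real.sqrt (2*l) * |u|) := by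
  have h2 : (0:ℝ) ≤ 2 * l := by linarith
  rw [Gl, Real.rpow_neg h2, ← Real.sqrt_eq_rpow]

lemma exp_neg_lip {x y : ℝ} (hx : 0 ≤ x) (hy : 0 ≤ y) :
    |Real.exp (-x) - Real.exp (-y)| ≤ |x - y| := by
  wlog h : x ≤ y generalizing x y
  · rw [abs_sub_comm, abs_sub_comm x y]; exact this hy hx (le_of_not_ge h)
  have h1 : Real.exp (-y) ≤ Real.exp (-x) := Real.exp_le_exp.2 (by linarith)
  rw [abs_of_nonneg (by linarith), abs_of_nonpos (by linarith)]
  have h2 : Real.exp (-x) - Real.exp (-y) = Real.exp (-x) * (1 - Real.exp (x - y)) := by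
    rw [mul_sub, mul_one, ← Real.exp_add]; ring_nf
  rw [h2]
  have h3 : Real.exp (-x) ≤ 1 := Real.exp_le_one_iff.2 (by linarith)
  have h4 : 1 - Real.exp (x - y) ≤ y - x := by
    have := Real.add_one_le_exp (x - y); linarith
  have h5 : 0 ≤ 1 - Real.exp (x - y) := by
    have : Real.exp (x - y) ≤ 1 := Real.exp_le_one_iff.2 (by linarith)
    linarith
  calc Real.exp (-x) * (1 - Real.exp (x - y)) ≤ 1 * (y - x) := by
        exact mul_le_mul h3 h4 h5 zero_le_one
    _ = -(x - y) := by ring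

lemma Gl_lip {l : ℝ} (hl : 0 < l) (s t : ℝ) : |Gl l s - Gl l t| ≤ |s - t| := by
  have ha : 0 < Real.sqrt (2*l) := Real.sqrt_pos.2 (by linarith)
  set a := Real.sqrt (2*l)
  rw [Gl_eq hl, Gl_eq hl, ← mul_sub, abs_mul, abs_of_nonneg (inv_nonneg.2 ha.le)]
  have h1 : |Real.exp (-a * |s|) - Real.exp (-a * |t|)| ≤ abs (a * |s| - a * |t|) := by
    have := exp_neg_lip (x := a * |s|) (y := a * |t|)
      (mul_nonneg ha.le (abs_nonneg s)) (mul_nonneg ha.le (abs_nonneg t))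
    simpa [neg_mul] using this
  calc a⁻¹ * |Real.exp (-a * |s|) - Real.exp (-a * |t|)| ≤ a⁻¹ * abs (a * |s| - a * |t|) := by
        exact mul_le_mul_of_nonneg_left h1 (inv_nonneg.2 ha.le)
    _ = abs (|s| - |t|) := by
        rw [← mul_sub, abs_mul, abs_of_nonneg ha.le, ← mul_assoc, inv_mul_cancel₀ ha.ne', one_mul]
    _ ≤ |s - t| := abs_abs_sub_abs_le_abs_sub s t

lemma gl_neg (l : ℝ) (u : ℝ) : gl l (-u) = -gl l u := by
  simp [gl, Real.sign_neg]

lemma gl_abs_le (l : ℝ) (u : ℝ) : |gl l u| ≤ 1 := by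
  rw [gl, abs_mul, abs_neg]
  have h1 : |Real.sign u| ≤ 1 := by
    rcases Real.sign_apply_eq u with h | h | h <;> simp [h]
  have h2 : |Real.exp (-Real.sqrt (2*l) * |u|)| ≤ 1 := by
    rw [abs_of_nonneg (Real.exp_pos _).le]
    refine Real.exp_le_one_iff.2 ?_
    rw [neg_mul]
    exact neg_nonpos.2 (mul_nonneg (Real.sqrt_nonneg _) (abs_nonneg _))
  calc |Real.sign u| * |Real.exp (-Real.sqrt (2*l) * |u|)| ≤ 1 * 1 :=
      mul_le_mul h1 h2 (abs_nonneg _) zero_le_one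
    _ = 1 := one_mul 1

lemma hasDerivAt_Gl {l : ℝ} (hl : 0 < l) {u : ℝ} (hu : u ≠ 0) :
    HasDerivAt (Gl l) (gl l u) u := by
  have ha : 0 < Real.sqrt (2*l) := Real.sqrt_pos.2 (by linarith)
  set a := Real.sqrt (2*l) with ha_def
  rcases hu.lt_or_gt with h | h
  · -- u < 0
    have hd : HasDerivAt (fun v : ℝ => a⁻¹ * Real.exp (a * v)) (Real.exp (a * u)) u := by
      have := ((hasDerivAt_id u).const_mul a).exp
      have h2 := this.const_mul a⁻¹
      refine h2.congr_deriv ?_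
      simp only [id, mul_one]
      field_simp
    have heq : Gl l =ᶠ[nhds u] (fun v : ℝ => a⁻¹ * Real.exp (a * v)) := by
      filter_upwards [Iio_mem_nhds h] with v hv
      rw [Gl_eq hl, abs_of_neg hv, neg_mul_neg]
    have hgl : gl l u = Real.exp (a * u) := by
      rw [gl, Real.sign_of_neg h, abs_of_neg h, neg_mul_neg, neg_neg, one_mul]
    rw [hgl]
    exact hd.congr_of_eventuallyEq heq
  · -- u > 0
    have hd : HasDerivAt (fun v : ℝ => a⁻¹ * Real.exp (-a * v)) (-Real.exp (-a * u)) u := by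
      have := ((hasDerivAt_id u).const_mul (-a)).exp
      have h2 := this.const_mul a⁻¹
      refine h2.congr_deriv ?_
      simp only [id, mul_one]
      field_simp
    have heq : Gl l =ᶠ[nhds u] (fun v : ℝ => a⁻¹ * Real.exp (-a * v)) := by
      filter_upwards [Ioi_mem_nhds h] with v hv
      rw [Gl_eq hl, abs_of_pos hv]
    have hgl : gl l u = -Real.exp (-a * u) := by
      rw [gl, Real.sign_of_pos h, abs_of_pos h, neg_one_mul]
    rw [hgl]
    exact hd.congr_of_eventuallyEq heq

lemma Gl_abs_le {l : ℝ} (hl : 0 < l) (u : ℝ) : |Gl l u| ≤ (Real.sqrt (2*l))⁻¹ := by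
  have ha : 0 < Real.sqrt (2*l) := Real.sqrt_pos.2 (by linarith)
  rw [Gl_eq hl, abs_mul, abs_of_nonneg (inv_nonneg.2 ha.le),
    abs_of_nonneg (Real.exp_pos _).le]
  have : Real.exp (-Real.sqrt (2*l) * |u|) ≤ 1 := by
    refine Real.exp_le_one_iff.2 ?_
    rw [neg_mul]
    exact neg_nonpos.2 (mul_nonneg ha.le (abs_nonneg _))
  calc (Real.sqrt (2*l))⁻¹ * Real.exp (-Real.sqrt (2*l) * |u|) ≤ (Real.sqrt (2*l))⁻¹ * 1 :=
      mul_le_mul_of_nonneg_left this (inv_nonneg.2 ha.le)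
    _ = _ := mul_one _

lemma continuous_Gl (l : ℝ) : Continuous (Gl l) := by
  unfold Gl; fun_prop

lemma measurable_gl (l : ℝ) : Measurable (gl l) := by
  unfold gl
  exact (measurable_realSign.neg).mul (by fun_prop)

/-- Let `μ` be a finite Borel measure on `ℝ` and `λ > 0`, and set
`F(x) = ∫_ℝ G_λ(y − x) μ(dy)`. Then for every `x`, `F` has a left derivative at `x` equal to
`∫_ℝ g_λ(x − y) μ(dy) + μ({x})`. -/
theorem integral_Gl_left_deriv (μ : Measure ℝ) [IsFiniteMeasure μ] (l : ℝ) (hl : 0 < l)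
    (x : ℝ) :
    Tendsto (fun h : ℝ => ((∫ y, Gl l (y - (x + h)) ∂μ) - ∫ y, Gl l (y - x) ∂μ) / h)
      (nhdsWithin 0 (Set.Iio 0))
      (nhds ((∫ y, gl l (x - y) ∂μ) + (μ {x}).toReal)) := by
  have ha : 0 < Real.sqrt (2*l) := Real.sqrt_pos.2 (by linarith)
  set a := Real.sqrt (2*l) with ha_def
  have hGint : ∀ c : ℝ, Integrable (fun y => Gl l (y - c)) μ := by
    intro c
    refine Integrable.mono' (integrable_const a⁻¹)
      (((continuous_Gl l).comp (continuous_id.sub continuous_const)).aestronglyMeasurable) ?_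
    filter_upwards with y
    rw [Real.norm_eq_abs]; exact Gl_abs_le hl _
  set f : ℝ → ℝ := fun y => gl l (x - y) + Set.indicator {x} (fun _ => (1:ℝ)) y with hf
  have hglint : Integrable (fun y => gl l (x - y)) μ := by
    refine Integrable.mono' (integrable_const 1)
      (((measurable_gl l).comp (measurable_const.sub measurable_id)).aestronglyMeasurable) ?_
    filter_upwards with y
    rw [Real.norm_eq_abs]; exact gl_abs_le l _
  have hindint : Integrable (Set.indicator ({x} : Set ℝ) (fun _ => (1:ℝ))) μ :=
    (integrable_const 1).indicator (measurableSet_singleton x)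
  have hfint : ∫ y, f y ∂μ = (∫ y, gl l (x - y) ∂μ) + (μ {x}).toReal := by
    rw [hf, integral_add hglint hindint, integral_indicator_const _ (measurableSet_singleton x),
      smul_eq_mul, mul_one]; rfl
  have key : Tendsto (fun h : ℝ => ∫ y, (Gl l (y - (x + h)) - Gl l (y - x)) / h ∂μ)
      (nhdsWithin 0 (Set.Iio 0)) (nhds (∫ y, f y ∂μ)) := by
    apply tendsto_integral_filter_of_dominated_convergence (fun _ => (1:ℝ))
    · filter_upwards with h
      exact ((((continuous_Gl l).comp (continuous_id.sub continuous_const)).sub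
        ((continuous_Gl l).comp (continuous_id.sub continuous_const))).div_const
        h).aestronglyMeasurable
    · filter_upwards [self_mem_nhdsWithin] with h hh
      filter_upwards with y
      have hh0 : h ≠ 0 := ne_of_lt hh
      rw [Real.norm_eq_abs, abs_div, div_le_one (abs_pos.2 hh0)]
      calc |Gl l (y - (x + h)) - Gl l (y - x)| ≤ |y - (x+h) - (y - x)| :=
          Gl_lip hl _ _
        _ = |h| := by rw [show y - (x+h) - (y-x) = -h by ring, abs_neg]
    · exact integrable_const 1
    · filter_upwards with y
      by_cases hy : y = x
      · subst hy
        have hfy : f y = 1 := by simp [hf, gl]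
        rw [hfy]
        have hψ : HasDerivAt (fun h : ℝ => a⁻¹ * Real.exp (a * h)) 1 0 := by
          have := (((hasDerivAt_id (0:ℝ)).const_mul a).exp).const_mul a⁻¹
          refine this.congr_deriv ?_
          simp [inv_mul_cancel₀ ha.ne']
        have h1 := hasDerivAt_iff_tendsto_slope.1 hψ
        have h2 := h1.mono_left
          (nhdsWithin_mono (0:ℝ) (fun z hz => ne_of_lt hz))
        refine h2.congr' ?_
        filter_upwards [self_mem_nhdsWithin] with h hh
        have hh' : (0:ℝ) < -h := neg_pos.2 hh
        have e1 : Gl l (y - (y + h)) = a⁻¹ * Real.exp (a * h) := by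
          rw [show y - (y + h) = -h by ring, Gl_eq hl, abs_of_pos hh', neg_mul_neg]
        have e2 : Gl l (y - y) = a⁻¹ * Real.exp (a * 0) := by
          rw [sub_self, Gl_eq hl, abs_zero, mul_zero, mul_zero]
        rw [slope_def_field, e1, e2, sub_zero]
      · have hu : y - x ≠ 0 := sub_ne_zero.2 hy
        have hfy : f y = gl l (x - y) := by
          simp [hf, Set.indicator_of_notMem, hy]
        rw [hfy]
        have hinner : HasDerivAt (fun h : ℝ => y - x - h) (-1) 0 :=
          (hasDerivAt_id (0:ℝ)).const_sub (y - x)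
        have houter : HasDerivAt (Gl l) (gl l (y - x)) (y - x - 0) := by
          rw [sub_zero]; exact hasDerivAt_Gl hl hu
        have hφ : HasDerivAt (fun h : ℝ => Gl l (y - x - h)) (gl l (y - x) * (-1)) 0 :=
          houter.comp 0 hinner
        have hval : gl l (y - x) * (-1) = gl l (x - y) := by
          rw [mul_neg_one, ← gl_neg, neg_sub]
        rw [hval] at hφ
        have h1 := hasDerivAt_iff_tendsto_slope.1 hφ
        have h2 := h1.mono_left
          (nhdsWithin_mono (0:ℝ) (fun z hz => ne_of_lt hz))
        refine h2.congr (fun h => ?_)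
        rw [slope_def_field, sub_zero, sub_zero, show y - x - h = y - (x + h) by ring]
  rw [hfint] at key
  refine key.congr' ?_
  filter_upwards [self_mem_nhdsWithin] with h hh
  have hh0 : h ≠ 0 := ne_of_lt hh
  rw [← integral_sub (hGint _) (hGint _), integral_div]
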